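/- Let n, m, k, l be natural numbers, let G be an n×m complex matrix, let V be an n×k complex matrix with Vᴴ V = I, and let W be an m×l complex matrix with Wᴴ W = I. Then for every k×l complex matrix S one has ‖G − V (Vᴴ G W) Wᴴ‖_F ≤ ‖G − V S Wᴴ‖_F, i.e., the coupling matrix Ŝ := Vᴴ G W gives the best approximation of G of the form V S Wᴴ in the Frobenius norm. -/

import Mathlib

open Matrix

/-- The Frobenius norm of a complex matrix. -/
noncomputable def frobNorm {α β : Type*} [Fintype α] [Fintype β] (A : Matrix α β ℂ) : ℝ :=
  Real.sqrt (∑ i, ∑ j, ‖A i j‖ ^ 2)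

/-- Pythagoras for the Frobenius square sum when the trace inner product vanishes. -/
lemma frob_pythagoras {n m : ℕ} (A B : Matrix (Fin n) (Fin m) ℂ)
    (h : Matrix.trace (Aᴴ * B) = 0) :
    (∑ i, ∑ j, ‖(A + B) i j‖ ^ 2)
      = (∑ i, ∑ j, ‖A i j‖ ^ 2) + ∑ i, ∑ j, ‖B i j‖ ^ 2 := by
  have hsum : (∑ i, ∑ j, A i j * (starRingEnd ℂ) (B i j)) = 0 := by
    have htr : Matrix.trace (Aᴴ * B)
        = ∑ j, ∑ i, (starRingEnd ℂ) (A i j) * B i j := by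
      simp [Matrix.trace, Matrix.diag, Matrix.mul_apply, Matrix.conjTranspose_apply]
    have := congrArg (starRingEnd ℂ) (htr.symm.trans h)
    simp only [map_sum, _root_.map_mul, RingHom.map_zero, Complex.conj_conj,
      RingHomCompTriple.comp_apply, RingHom.id_apply] at this
    rw [Finset.sum_comm] at this
    simpa using this
  have hnorm : ∀ z : ℂ, ‖z‖ ^ 2 = Complex.normSq z := by
    intro z
    rw [← Complex.normSq_eq_norm_sq]
  simp only [hnorm, Matrix.add_apply]
  have expand : ∀ i j, Complex.normSq (A i j + B i j)
      = Complex.normSq (A i j) + Complex.normSq (B i j)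
        + 2 * (A i j * (starRingEnd ℂ) (B i j)).re := by
    intro i j
    exact Complex.normSq_add _ _
  simp only [expand, Finset.sum_add_distrib, ← Finset.mul_sum]
  have : (∑ i, ∑ j, (A i j * (starRingEnd ℂ) (B i j)).re)
      = (∑ i, ∑ j, A i j * (starRingEnd ℂ) (B i j)).re := by
    simp [Complex.re_sum]
  rw [this, hsum]
  simp

/-- Best-approximation property of orthogonal directional cluster bases:
the coupling matrix `Ŝ := Vᴴ G W` gives the best approximation of `G` of the
form `V S Wᴴ` in the Frobenius norm. -/
theorem coupling_best_approximation (n m k l : ℕ) (G : Matrix (Fin n) (Fin m) ℂ)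
    (V : Matrix (Fin n) (Fin k) ℂ) (W : Matrix (Fin m) (Fin l) ℂ)
    (hV : Vᴴ * V = 1) (hW : Wᴴ * W = 1) (S : Matrix (Fin k) (Fin l) ℂ) :
    frobNorm (G - V * (Vᴴ * G * W) * Wᴴ) ≤ frobNorm (G - V * S * Wᴴ) := by
  set Sh := Vᴴ * G * W with hSh
  set X := G - V * Sh * Wᴴ with hX
  set T := Sh - S with hT
  set Y := V * T * Wᴴ with hY
  have hdecomp : G - V * S * Wᴴ = X + Y := by
    simp only [hX, hY, hT, Matrix.sub_mul, Matrix.mul_sub]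
    abel
  have h1 : Vᴴ * (V * Sh * Wᴴ) * W = Sh := by
    calc Vᴴ * (V * Sh * Wᴴ) * W = (Vᴴ * V) * (Sh * (Wᴴ * W)) := by
          simp only [Matrix.mul_assoc]
      _ = Sh := by rw [hV, hW, Matrix.one_mul, Matrix.mul_one]
  have hVXW : Vᴴ * X * W = 0 := by
    rw [hX, Matrix.mul_sub, Matrix.sub_mul, h1, ← hSh, sub_self]
  have htr : Matrix.trace (Xᴴ * Y) = 0 := by
    have e1 : Xᴴ * Y = (Xᴴ * (V * T)) * Wᴴ := by
      rw [hY]; simp only [Matrix.mul_assoc]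
    rw [e1, Matrix.trace_mul_comm]
    have e2 : Wᴴ * (Xᴴ * (V * T)) = (Vᴴ * X * W)ᴴ * T := by
      rw [Matrix.conjTranspose_mul, Matrix.conjTranspose_mul,
        Matrix.conjTranspose_conjTranspose]
      simp only [Matrix.mul_assoc]
    rw [e2, hVXW]
    simp
  have hpy := frob_pythagoras X Y htr
  rw [hdecomp]
  unfold frobNorm
  rw [hpy]
  apply Real.sqrt_le_sqrt
  have hY0 : (0:ℝ) ≤ ∑ i, ∑ j, ‖Y i j‖ ^ 2 := by
    apply Finset.sum_nonneg; intro i _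
    apply Finset.sum_nonneg; intro j _
    positivity
  linarith
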